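/- With the energy-momentum map τ on null metric hypersurface data of dimension n ≥ 2 at a point, for T = 2n⊗_sX − QP in the range of τ, the tensor V := 2ℓ⊗_s γ(X,·) + Q ℓ⊗ℓ − (1/(n−1))(Qℓ⁽²⁾ + 2ℓ(X)) γ satisfies τ(V) = T, and the full preimage τ⁻¹(T) equals {V + V^H : V^H ∈ K₀} where K₀ = {W symmetric : W(n,·)=0, tr_P W = 0} is the kernel of τ. -/

import Mathlib

open Module LinearMap

variable {V : Type*} [AddCommGroup V] [Module ℝ V] [FiniteDimensional ℝ V]

/-- The trace `P^{ab} W_{ab}`. -/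
noncomputable def trP (P : Dual ℝ V →ₗ[ℝ] V) (W : V →ₗ[ℝ] Dual ℝ V) : ℝ :=
  LinearMap.trace ℝ V (P ∘ₗ W)

/-- The energy-momentum map, evaluated on two covectors. -/
noncomputable def tau (P : Dual ℝ V →ₗ[ℝ] V) (n : V) (W : V →ₗ[ℝ] Dual ℝ V)
    (ω χ : Dual ℝ V) : ℝ :=
  ω n * χ (P (W n)) + χ n * ω (P (W n)) - W n n * χ (P ω) - ω n * χ n * trP P W

/-- The particular solution `V_T = 2ℓ ⊗ₛ γ(X,·) + Q ℓ⊗ℓ - (Qℓ⁽²⁾ + 2ℓ(X))/(𝔫-1) γ`. -/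
noncomputable def particularSolution (γ : V →ₗ[ℝ] Dual ℝ V) (ℓ : Dual ℝ V) (l2 : ℝ)
    (𝔫 : ℕ) (X : V) (Q : ℝ) : V →ₗ[ℝ] Dual ℝ V :=
  ℓ.smulRight (γ X) + (γ X).smulRight ℓ + Q • ℓ.smulRight ℓ
    - ((Q * l2 + 2 * ℓ X) / ((𝔫 : ℝ) - 1)) • γ

/-- Trace of a rank-one map. -/
lemma trace_smulRight'' (f : Dual ℝ V) (u : V) :
    LinearMap.trace ℝ V (f.smulRight u) = f u := by
  have h : f.smulRight u = dualTensorHom ℝ V V (f ⊗ₜ u) := by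
    ext v; simp [dualTensorHom_apply]
  rw [h, trace_eq_contract_apply, contractLeft_apply]

lemma comp_smulRight' (P : Dual ℝ V →ₗ[ℝ] V) (f : Dual ℝ V) (u : Dual ℝ V) :
    P ∘ₗ f.smulRight u = f.smulRight (P u) := by
  ext v; simp

lemma tau_sub (P : Dual ℝ V →ₗ[ℝ] V) (n : V) (W₁ W₂ : V →ₗ[ℝ] Dual ℝ V)
    (ω χ : Dual ℝ V) :
    tau P n (W₁ - W₂) ω χ = tau P n W₁ ω χ - tau P n W₂ ω χ := by
  have htr : trP P (W₁ - W₂) = trP P W₁ - trP P W₂ := by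
    unfold trP
    rw [LinearMap.comp_sub, map_sub]
  simp only [tau, htr, LinearMap.sub_apply, map_sub]
  ring

/-- For `T = 2n ⊗ₛ X - Q P` in the range of `τ`, the explicit tensor
`V_T := 2ℓ⊗ₛX̂ + Qℓ⊗ℓ - (1/(𝔫-1))(Qℓ⁽²⁾ + 2ℓ(X))γ` satisfies `τ(V_T) = T`, and the full
preimage of `T` consists exactly of `V_T + V^H` with `V^H` in the kernel
`K₀ = {W : W(n,·)=0, tr_P W = 0}` of `τ`. -/
theorem preimage_of_energy_momentum_map
    (γ : V →ₗ[ℝ] Dual ℝ V) (ℓ : Dual ℝ V) (l2 : ℝ) (n : V) (P : Dual ℝ V →ₗ[ℝ] V)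
    (𝔫 : ℕ) (hdim : finrank ℝ V = 𝔫) (h𝔫 : 2 ≤ 𝔫)
    (hγsym : ∀ x y, γ x y = γ y x)
    (hγn : γ n = 0)
    (hℓn : ℓ n = 1)
    (hPsym : ∀ ω χ : Dual ℝ V, ω (P χ) = χ (P ω))
    (hPℓ : P ℓ + l2 • n = 0)
    (hPγ : ∀ x : V, P (γ x) + ℓ x • n = x)
    (X : V) (Q : ℝ) :
    (∀ ω χ : Dual ℝ V, tau P n (particularSolution γ ℓ l2 𝔫 X Q) ω χ
        = ω n * χ X + χ n * ω X - Q * χ (P ω)) ∧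
    (∀ W : V →ₗ[ℝ] Dual ℝ V, (∀ x y, W x y = W y x) →
      ((∀ ω χ : Dual ℝ V, tau P n W ω χ = ω n * χ X + χ n * ω X - Q * χ (P ω)) ↔
        ((W - particularSolution γ ℓ l2 𝔫 X Q) n = 0 ∧
          trP P (W - particularSolution γ ℓ l2 𝔫 X Q) = 0))) := by
  have hPγX : P (γ X) = X - ℓ X • n := eq_sub_of_add_eq (hPγ X)
  have hPℓ' : P ℓ = -(l2 • n) := eq_neg_of_add_eq_zero_left hPℓ
  have hγXn : γ X n = 0 := by rw [hγsym, hγn]; rfl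
  have h𝔫1 : (𝔫 : ℝ) - 1 ≠ 0 := by
    have : (2 : ℝ) ≤ (𝔫 : ℝ) := by exact_mod_cast h𝔫
    linarith
  set c : ℝ := (Q * l2 + 2 * ℓ X) / ((𝔫 : ℝ) - 1) with hc
  set Vp := particularSolution γ ℓ l2 𝔫 X Q with hVp
  have hVpn : Vp n = γ X + Q • ℓ := by
    simp [hVp, particularSolution, hℓn, hγn, hγXn]
  have hVpnn : Vp n n = Q := by
    rw [hVpn]; simp [hγXn, hℓn]
  have hPVpn : P (Vp n) = X - (ℓ X + Q * l2) • n := by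
    rw [hVpn, map_add, map_smul, hPγX, hPℓ']
    module
  have hPγcomp : P ∘ₗ γ = LinearMap.id - ℓ.smulRight n := by
    ext x
    simp only [LinearMap.comp_apply, LinearMap.sub_apply, LinearMap.id_apply,
      LinearMap.smulRight_apply]
    exact eq_sub_of_add_eq (hPγ x)
  have htrPγ : LinearMap.trace ℝ V (P ∘ₗ γ) = (𝔫 : ℝ) - 1 := by
    rw [hPγcomp, map_sub, LinearMap.trace_id, trace_smulRight'', hℓn, hdim]
  have htrVp : trP P Vp = -(2 * Q * l2) - 2 * ℓ X := by
    have hexp : P ∘ₗ Vp = ℓ.smulRight (P (γ X)) + (γ X).smulRight (P ℓ)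
        + Q • ℓ.smulRight (P ℓ) - c • (P ∘ₗ γ) := by
      simp only [hVp, particularSolution, LinearMap.comp_add, LinearMap.comp_sub,
        LinearMap.comp_smul, comp_smulRight', ← hc]
    have h1 : ℓ (P (γ X)) = 0 := by rw [hPγX]; simp [hℓn]
    have h2 : (γ X) (P ℓ) = 0 := by rw [hPℓ']; simp [hγXn]
    have h3 : ℓ (P ℓ) = -l2 := by rw [hPℓ']; simp [hℓn]
    unfold trP
    rw [hexp, map_sub, map_add, map_add, map_smul, map_smul,
      trace_smulRight'', trace_smulRight'', trace_smulRight'', htrPγ,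
      h1, h2, h3, hc]
    have h4 : (Q * l2 + 2 * ℓ X) / ((𝔫 : ℝ) - 1) * ((𝔫 : ℝ) - 1) = Q * l2 + 2 * ℓ X :=
      div_mul_cancel₀ _ h𝔫1
    simp only [smul_eq_mul]
    linear_combination (-1 : ℝ) * h4
  have part1 : ∀ ω χ : Dual ℝ V, tau P n Vp ω χ
      = ω n * χ X + χ n * ω X - Q * χ (P ω) := by
    intro ω χ
    unfold tau
    rw [hVpnn, hPVpn, htrVp]
    simp only [map_sub, map_smul, smul_eq_mul]
    ring
  refine ⟨part1, fun W hWsym => ?_⟩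
  set D := W - Vp with hD
  have key : (∀ ω χ : Dual ℝ V, tau P n W ω χ = ω n * χ X + χ n * ω X - Q * χ (P ω))
      ↔ (∀ ω χ : Dual ℝ V, tau P n D ω χ = 0) := by
    constructor
    · intro h ω χ; rw [hD, tau_sub, h, part1]; ring
    · intro h ω χ
      have := tau_sub P n W Vp ω χ
      rw [← hD, h ω χ] at this
      rw [← part1 ω χ]
      linarith
  rw [key]
  constructor
  · intro h
    -- From τ(D)=0 deduce D n = 0 and trP P D = 0.
    have hγPω : ∀ ω : Dual ℝ V, γ (P ω) = ω - ω n • ℓ := by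
      intro ω
      ext x
      have h1 : γ (P ω) x = (γ x) (P ω) := hγsym _ _
      have h2 : (γ x) (P ω) = ω (P (γ x)) := hPsym _ _
      have h3 : P (γ x) = x - ℓ x • n := eq_sub_of_add_eq (hPγ x)
      rw [h1, h2, h3]
      simp [mul_comm]
    set s : ℝ := trP P D - D n n * l2 - ℓ (P (D n)) with hs
    have hPDn : P (D n) = s • n := by
      rw [← sub_eq_zero, ← Module.forall_dual_apply_eq_zero_iff ℝ]
      intro χ
      have h0 := h ℓ χ
      unfold tau at h0
      rw [hℓn, hPℓ'] at h0
      simp only [map_sub, map_smul, map_neg, smul_eq_mul, one_mul] at h0 ⊢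
      rw [hs]
      linear_combination h0
    have hDn : D n = D n n • ℓ := by
      have := hγPω (D n)
      rw [hPDn, map_smul, hγn, smul_zero] at this
      have h2 := this.symm
      rw [sub_eq_zero] at h2
      exact h2
    -- show D n n = 0 using nondegeneracy provided by 𝔫 ≥ 2
    have hγne : ∃ x y, γ x y ≠ 0 := by
      by_contra h'
      push_neg at h'
      have hspan : ∀ x : V, ℓ x • n = x := by
        intro x
        have hγx : γ x = 0 := by ext y; exact h' x y
        have := hPγ x
        rwa [hγx, map_zero, zero_add] at this
      have hle : finrank ℝ V ≤ 1 := finrank_le_one n (fun w => ⟨ℓ w, hspan w⟩)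
      omega
    obtain ⟨x, y, hxy⟩ := hγne
    have hDnn : D n n = 0 := by
      have h0 := h (γ x) (γ y)
      unfold tau at h0
      have hx0 : (γ x) n = 0 := by rw [hγsym, hγn]; rfl
      have hy0 : (γ y) n = 0 := by rw [hγsym, hγn]; rfl
      have h3 : P (γ x) = x - ℓ x • n := eq_sub_of_add_eq (hPγ x)
      rw [hx0, hy0, h3] at h0
      simp only [map_sub, map_smul, smul_eq_mul, zero_mul, mul_zero] at h0
      rw [hy0] at h0
      have hyx : (γ y) x = γ x y := hγsym y x
      rw [hyx] at h0
      have : D n n * γ x y = 0 := by linarith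
      exact (mul_eq_zero.mp this).resolve_right hxy
    have hDn0 : D n = 0 := by rw [hDn, hDnn, zero_smul]
    refine ⟨hDn0, ?_⟩
    have h0 := h ℓ ℓ
    unfold tau at h0
    rw [hDn0, hℓn] at h0
    simp only [map_zero, LinearMap.zero_apply, mul_zero, zero_mul, one_mul] at h0
    linarith
  · rintro ⟨h1, h2⟩ ω χ
    unfold tau
    simp [h1, h2]
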